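/- arXiv:1610.04772 — 2 statements merged into one kernel-verified Lean document; each statement's English description precedes it below -/
import Mathlib

section
/- Let Ω = ℝ² \ cl(𝓗) where 𝓗 is a bounded open set containing 0 with the interior tangent ball property. Then there exists at most one function φ continuous on cl(Ω), twice continuously differentiable and harmonic in Ω, with φ = 0 on ∂Ω and |φ(x) − log|x|| bounded on cl(Ω). -/
set_option maxHeartbeats 1000000

open Metric Set

noncomputable def laplacian (f : EuclideanSpace ℝ (Fin 2) → ℝ)
    (x : EuclideanSpace ℝ (Fin 2)) : ℝ :=
  ∑ i, fderiv ℝ (fun y => fderiv ℝ f y (EuclideanSpace.single i 1)) x (EuclideanSpace.single i 1)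

/-- The interior tangent ball property for the hole `H`. -/
def InteriorTangentBall (H : Set (EuclideanSpace ℝ (Fin 2))) : Prop :=
  ∀ x ∈ frontier H, ∃ x₀ ∈ H, ∃ r₀ > (0 : ℝ), x ∈ sphere x₀ r₀ ∧ ball x₀ r₀ ⊆ H

noncomputable abbrev E2 := EuclideanSpace ℝ (Fin 2)

noncomputable abbrev ee (i : Fin 2) : E2 := EuclideanSpace.single i 1

/-- The quadratic function `x ↦ ‖x‖²` written coordinatewise. -/
noncomputable def qq (x : E2) : ℝ := ∑ i, x i ^ 2

lemma continuous_qq : Continuous qq :=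
  continuous_finset_sum _ fun i _ => ((EuclideanSpace.proj (𝕜 := ℝ) i).continuous).pow 2

lemma qq_nonneg (x : E2) : 0 ≤ qq x := Finset.sum_nonneg fun i _ => sq_nonneg _

lemma qq_eq_norm (x : E2) : qq x = ‖x‖ ^ 2 := by
  rw [EuclideanSpace.norm_eq, Real.sq_sqrt (by positivity)]
  simp [qq, Real.norm_eq_abs, sq_abs]

/-- The (constant) second derivative of `qq`, as a continuous bilinear-ish map. -/
noncomputable def Q2 : E2 →L[ℝ] E2 →L[ℝ] ℝ :=
  ∑ i, (2:ℝ) • (EuclideanSpace.proj i).smulRight (EuclideanSpace.proj i)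

lemma Q2_apply (v w : E2) : Q2 v w = ∑ i, 2 * v i * w i := by
  simp [Q2, ContinuousLinearMap.sum_apply, ContinuousLinearMap.smul_apply,
    ContinuousLinearMap.smulRight_apply, smul_eq_mul]
  ring

lemma Q2_apply_single (v : E2) (i : Fin 2) : Q2 v (ee i) = 2 * v i := by
  rw [Q2_apply]
  rw [Fin.sum_univ_two]
  fin_cases i <;> simp [EuclideanSpace.single_apply]

lemma Q2_sum : ∑ i, Q2 (ee i) (ee i) = 4 := by
  rw [Fin.sum_univ_two, Q2_apply_single, Q2_apply_single]
  norm_num [EuclideanSpace.single_apply]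

lemma hasFDerivAt_qq (y : E2) : HasFDerivAt qq (Q2 y) y := by
  have hterm : ∀ i : Fin 2, HasFDerivAt (fun x : E2 => x i ^ 2)
      ((2 * y i) • (EuclideanSpace.proj (𝕜 := ℝ) i)) y := by
    intro i
    have h := ((EuclideanSpace.proj (𝕜 := ℝ) i).hasFDerivAt (x := y)).fun_mul
      ((EuclideanSpace.proj (𝕜 := ℝ) i).hasFDerivAt (x := y))
    have heq : (fun x : E2 => x i ^ 2)
        = fun x : E2 => (EuclideanSpace.proj (𝕜 := ℝ) i) x * (EuclideanSpace.proj (𝕜 := ℝ) i) x := by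
      funext x; simp [sq]
    rw [heq]
    refine h.congr_fderiv ?_
    ext v
    simp only [ContinuousLinearMap.smul_apply, ContinuousLinearMap.add_apply, smul_eq_mul, PiLp.proj_apply]
    ring
  have h1 : HasFDerivAt qq (∑ i, (2 * y i) • (EuclideanSpace.proj (𝕜 := ℝ) i)) y :=
    HasFDerivAt.fun_sum fun i _ => hterm i
  convert h1 using 1
  ext v
  rw [Q2_apply, ContinuousLinearMap.sum_apply]
  refine Finset.sum_congr rfl fun i _ => ?_
  simp only [ContinuousLinearMap.smul_apply, smul_eq_mul, PiLp.proj_apply]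

/-- If `h` is differentiable near `0` with `h'` differentiable at `0` and `h` has a local
maximum at `0`, then the second derivative at `0` is nonpositive. -/
lemma second_deriv_nonpos_of_isLocalMax {h h' : ℝ → ℝ} {c : ℝ}
    (hh : ∀ᶠ t in nhds (0:ℝ), HasDerivAt h (h' t) t)
    (hh' : HasDerivAt h' c 0) (hm : IsLocalMax h 0) : c ≤ 0 := by
  by_contra hcpos
  push_neg at hcpos
  have h'0 : h' 0 = 0 := by
    have h1 : deriv h 0 = 0 := hm.deriv_eq_zero
    have h2 : HasDerivAt h (h' 0) 0 := hh.self_of_nhds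
    rw [← h2.deriv]; exact h1
  have hslope := hasDerivAt_iff_tendsto_slope.mp hh'
  have hev : ∀ᶠ t in nhdsWithin (0:ℝ) (Iio 0), h' t < 0 := by
    have h1 : ∀ᶠ t in nhdsWithin (0:ℝ) ({(0:ℝ)}ᶜ), 0 < slope h' 0 t :=
      hslope.eventually_mem (Ioi_mem_nhds hcpos)
    have h2 : ∀ᶠ t in nhdsWithin (0:ℝ) (Iio 0), 0 < slope h' 0 t :=
      h1.filter_mono (nhdsWithin_mono 0 (fun t ht => ne_of_lt ht))
    have h3 : ∀ᶠ t in nhdsWithin (0:ℝ) (Iio 0), t ∈ Iio (0:ℝ) := self_mem_nhdsWithin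
    filter_upwards [h2, h3] with t ht1 ht2
    have : slope h' 0 t = h' t / t := by
      simp [slope_def_field, h'0]
    rw [this] at ht1
    by_contra hcon
    push_neg at hcon
    have : h' t / t ≤ 0 := div_nonpos_of_nonneg_of_nonpos hcon (le_of_lt ht2)
    linarith
  have hall : ∀ᶠ t in nhdsWithin (0:ℝ) (Iio 0),
      HasDerivAt h (h' t) t ∧ h' t < 0 ∧ h t ≤ h 0 := by
    have hm' : ∀ᶠ t in nhds (0:ℝ), h t ≤ h 0 := hm
    filter_upwards [hh.filter_mono nhdsWithin_le_nhds, hev,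
      hm'.filter_mono nhdsWithin_le_nhds] with t h1 h2 h3
    exact ⟨h1, h2, h3⟩
  obtain ⟨l, hl, hsub⟩ := mem_nhdsLT_iff_exists_Ioo_subset.mp hall
  have hl0 : l < 0 := hl
  set t₀ := l / 2 with ht₀
  have ht₀mem : t₀ ∈ Ioo l 0 := ⟨by linarith, by linarith⟩
  have hanti : StrictAntiOn h (Icc t₀ 0) := by
    apply strictAntiOn_of_deriv_neg (convex_Icc t₀ 0)
    · intro t ht
      rcases eq_or_ne t 0 with rfl | htne
      · exact (hh.self_of_nhds).continuousAt.continuousWithinAt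
      · have htmem : t ∈ Ioo l 0 := ⟨by linarith [ht.1], lt_of_le_of_ne ht.2 htne⟩
        exact (hsub htmem).1.continuousAt.continuousWithinAt
    · intro t ht
      rw [interior_Icc] at ht
      have htmem : t ∈ Ioo l 0 := ⟨by linarith [ht.1], ht.2⟩
      rw [(hsub htmem).1.deriv]
      exact (hsub htmem).2.1
  have h1 : h 0 < h t₀ :=
    hanti (left_mem_Icc.2 (by linarith)) (right_mem_Icc.2 (by linarith)) ht₀mem.2
  exact absurd (hsub ht₀mem).2.2 (not_le.2 h1)

/-- Second-derivative test in a direction `v` at a local max. -/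
lemma bilin_nonpos_of_isLocalMax {g : E2 → ℝ} {F : E2 → E2 →L[ℝ] ℝ}
    {F' : E2 →L[ℝ] E2 →L[ℝ] ℝ} {z v : E2}
    (hF : ∀ᶠ y in nhds z, HasFDerivAt g (F y) y) (hF' : HasFDerivAt F F' z)
    (hm : IsLocalMax g z) : F' v v ≤ 0 := by
  set γ : ℝ → E2 := fun t => z + t • v with hγdef
  have hγ : ∀ t, HasDerivAt γ v t := by
    intro t
    have := ((hasDerivAt_id t).smul_const v).const_add z
    simpa [hγdef] using this
  have hγ0 : γ 0 = z := by simp [hγdef]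
  have hγc : Filter.Tendsto γ (nhds 0) (nhds z) := by
    rw [← hγ0]; exact (hγ 0).continuousAt
  have hh : ∀ᶠ t in nhds (0:ℝ), HasDerivAt (fun s => g (γ s)) (F (γ t) v) t := by
    filter_upwards [hγc.eventually hF] with t ht
    exact ht.comp_hasDerivAt t (hγ t)
  have hh' : HasDerivAt (fun t => F (γ t) v) (F' v v) 0 := by
    have hstep1' : HasFDerivAt F F' (γ 0) := by rw [hγ0]; exact hF'
    have h2 := hstep1'.comp_hasDerivAt 0 (hγ 0)
    have h3 := (ContinuousLinearMap.apply ℝ ℝ v).hasFDerivAt.comp_hasDerivAt 0 h2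
    exact h3
  have hm2 : ∀ᶠ y in nhds z, g y ≤ g z := hm
  have hm' : IsLocalMax (fun s => g (γ s)) 0 := by
    have := hγc.eventually hm2
    filter_upwards [this] with t ht
    simpa [hγ0] using ht
  exact second_deriv_nonpos_of_isLocalMax hh hh' hm'

/-- The `laplacian` computed from pointwise Fréchet derivative data. -/
lemma laplacian_eq {f : E2 → ℝ} {F : E2 → E2 →L[ℝ] ℝ}
    {F' : E2 →L[ℝ] E2 →L[ℝ] ℝ} {x : E2}
    (hF : ∀ᶠ y in nhds x, HasFDerivAt f (F y) y) (hF' : HasFDerivAt F F' x) :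
    laplacian f x = ∑ i, F' (ee i) (ee i) := by
  unfold laplacian
  refine Finset.sum_congr rfl fun i _ => ?_
  have hev : (fun y => fderiv ℝ f y (EuclideanSpace.single i 1))
      =ᶠ[nhds x] fun y => F y (EuclideanSpace.single i 1) :=
    hF.mono fun y hy => by
      show fderiv ℝ f y (EuclideanSpace.single i 1) = F y (EuclideanSpace.single i 1)
      rw [hy.fderiv]
  rw [hev.fderiv_eq]
  have hd : HasFDerivAt (fun y => F y (EuclideanSpace.single i 1))
      ((ContinuousLinearMap.apply ℝ ℝ ((EuclideanSpace.single i 1 : E2))).comp F') x :=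
    ((ContinuousLinearMap.apply ℝ ℝ ((EuclideanSpace.single i 1 : E2))).hasFDerivAt).comp x hF'
  rw [hd.fderiv]
  rfl

/-- Weak maximum principle on a bounded open set. -/
lemma maxPrinciple {U : Set E2} (hUo : IsOpen U) (hUb : Bornology.IsBounded U)
    {g : E2 → ℝ} (hgc : ContinuousOn g (closure U))
    {F : E2 → E2 →L[ℝ] ℝ} {F' : E2 → E2 →L[ℝ] E2 →L[ℝ] ℝ}
    (hF : ∀ x ∈ U, HasFDerivAt g (F x) x)
    (hF' : ∀ x ∈ U, HasFDerivAt F (F' x) x)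
    (hlap : ∀ x ∈ U, ∑ i, F' x (ee i) (ee i) = 0)
    (hfr : ∀ x ∈ frontier U, g x ≤ 0) :
    ∀ x ∈ closure U, g x ≤ 0 := by
  intro x hx
  have hne : (closure U).Nonempty := ⟨x, hx⟩
  have hK : IsCompact (closure U) := hUb.isCompact_closure
  obtain ⟨z₀, _, hz₀max⟩ := hK.exists_isMaxOn hne continuous_qq.continuousOn
  set B := qq z₀ with hB
  have hB0 : 0 ≤ B := qq_nonneg z₀
  have key : ∀ ε : ℝ, 0 < ε → g x ≤ ε * B := by
    intro ε hε
    set gε : E2 → ℝ := fun y => g y + ε * qq y with hgεdef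
    obtain ⟨z, hz, hzmax⟩ := hK.exists_isMaxOn hne
      (hgc.add ((continuous_const.mul continuous_qq).continuousOn))
    have hzU : z ∉ U := by
      intro hzU
      have hlm : IsLocalMax gε z :=
        hzmax.isLocalMax (Filter.mem_of_superset (hUo.mem_nhds hzU) subset_closure)
      have hevd : ∀ᶠ y in nhds z, HasFDerivAt gε ((fun y => F y + ε • Q2 y) y) y := by
        filter_upwards [hUo.eventually_mem hzU] with y hy
        exact (hF y hy).add ((hasFDerivAt_qq y).const_mul ε)
      have hderiv2 : HasFDerivAt (fun y => F y + ε • Q2 y) (F' z + ε • Q2) z :=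
        (hF' z hzU).add (Q2.hasFDerivAt.const_smul ε)
      have hB2 : ∀ i : Fin 2, (F' z + ε • Q2) (ee i) (ee i) ≤ 0 := fun i =>
        bilin_nonpos_of_isLocalMax hevd hderiv2 hlm
      have hsum : ∑ i, (F' z + ε • Q2) (ee i) (ee i) = 4 * ε := by
        have : ∑ i, (F' z + ε • Q2) (ee i) (ee i)
            = ∑ i, (F' z (ee i) (ee i) + ε * Q2 (ee i) (ee i)) := by
          refine Finset.sum_congr rfl fun i _ => ?_
          simp [ContinuousLinearMap.add_apply, ContinuousLinearMap.smul_apply, smul_eq_mul]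
        rw [this, Finset.sum_add_distrib, hlap z hzU, ← Finset.mul_sum, Q2_sum]
        ring
      have hle : ∑ i, (F' z + ε • Q2) (ee i) (ee i) ≤ 0 :=
        Finset.sum_nonpos fun i _ => hB2 i
      rw [hsum] at hle
      linarith
    have hzfr : z ∈ frontier U := by
      rw [hUo.frontier_eq]; exact ⟨hz, hzU⟩
    have h1 : g x ≤ gε x := by
      have := qq_nonneg x
      simp only [hgεdef]
      nlinarith
    have h2 : gε x ≤ gε z := hzmax hx
    have h3 : gε z ≤ 0 + ε * B := by
      have hg0 : g z ≤ 0 := hfr z hzfr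
      have hq : qq z ≤ B := hz₀max hz
      simp only [hgεdef]
      nlinarith
    linarith
  apply le_of_forall_pos_le_add
  intro δ hδ
  have h1 := key (δ / (B + 1)) (by positivity)
  have h2 : δ / (B + 1) * B ≤ δ := by
    rw [div_mul_eq_mul_div, div_le_iff₀ (by positivity)]
    nlinarith
  linarith

/-- Comparison with the logarithm: a subsolution that vanishes on the boundary of the
exterior domain and is bounded above is nonpositive. -/
lemma exterior_le {Ω : Set E2} (hΩo : IsOpen Ω) {ρ : ℝ} (hρ : 0 < ρ)
    (hfar : ∀ x ∈ closure Ω, ρ < ‖x‖)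
    {u : E2 → ℝ} (huc : ContinuousOn u (closure Ω))
    {F : E2 → E2 →L[ℝ] ℝ} {F' : E2 → E2 →L[ℝ] E2 →L[ℝ] ℝ}
    (hF : ∀ x ∈ Ω, HasFDerivAt u (F x) x)
    (hF' : ∀ x ∈ Ω, HasFDerivAt F (F' x) x)
    (hlap : ∀ x ∈ Ω, ∑ i, F' x (ee i) (ee i) = 0)
    (h0 : ∀ x ∈ frontier Ω, u x = 0)
    {M : ℝ} (hM0 : 0 ≤ M) (hM : ∀ x ∈ closure Ω, u x ≤ M) :
    ∀ x ∈ Ω, u x ≤ 0 := by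
  -- first, the derivative data for the logarithmic comparison function
  set FG : E2 → E2 →L[ℝ] ℝ := fun y => (qq y)⁻¹ • Q2 y with hFGdef
  set FG' : E2 → E2 →L[ℝ] E2 →L[ℝ] ℝ := fun x =>
    (qq x)⁻¹ • Q2 + ((-(qq x ^ 2)⁻¹) • Q2 x).smulRight (Q2 x) with hFG'def
  have hFGd : ∀ x : E2, qq x ≠ 0 → HasFDerivAt FG (FG' x) x := by
    intro x hne
    have ha : HasFDerivAt (fun y => (qq y)⁻¹) ((-(qq x ^ 2)⁻¹) • Q2 x) x :=
      (hasDerivAt_inv hne).comp_hasFDerivAt x (hasFDerivAt_qq x)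
    exact ha.smul Q2.hasFDerivAt
  have hFG'sum : ∀ x : E2, qq x ≠ 0 → ∑ i, FG' x (ee i) (ee i) = 0 := by
    intro x hne
    have hqx : qq x = x 0 ^ 2 + x 1 ^ 2 := Fin.sum_univ_two _
    have hterm : ∀ i : Fin 2, FG' x (ee i) (ee i)
        = (qq x)⁻¹ * 2 + (-(qq x ^ 2)⁻¹ * (2 * x i)) * (2 * x i) := by
      intro i
      have h1 : Q2 (ee i) (ee i) = 2 := by
        rw [Q2_apply_single]
        fin_cases i <;> simp [EuclideanSpace.single_apply]
      simp only [hFG'def, ContinuousLinearMap.add_apply, ContinuousLinearMap.smul_apply,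
        ContinuousLinearMap.smulRight_apply, smul_eq_mul, Q2_apply_single, h1]
    rw [Fin.sum_univ_two, hterm 0, hterm 1]
    rw [hqx] at hne ⊢
    field_simp
    ring
  intro x hx
  have hxc : x ∈ closure Ω := subset_closure hx
  have hqpos : ∀ y ∈ closure Ω, ρ ^ 2 < qq y := by
    intro y hy
    rw [qq_eq_norm]
    have := hfar y hy
    nlinarith
  have hqne : ∀ y ∈ closure Ω, qq y ≠ 0 := fun y hy =>
    ne_of_gt (lt_trans (by positivity) (hqpos y hy))
  -- it suffices to show `u x ≤ δ` for every positive `δ`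
  have main : ∀ δ : ℝ, 0 < δ → u x ≤ δ := by
    intro δ hδ
    set ψ : E2 → ℝ := fun y => Real.log (qq y) - Real.log (ρ ^ 2) with hψdef
    have hψnn : ∀ y ∈ closure Ω, 0 ≤ ψ y := by
      intro y hy
      have := hqpos y hy
      simp only [hψdef, sub_nonneg]
      exact Real.log_le_log (by positivity) this.le
    have hψx : 0 ≤ ψ x := hψnn x hxc
    set K := M * ψ x / δ with hK
    have hK0 : 0 ≤ K := by positivity
    set R := ρ * Real.exp K + 1 + ‖x‖ with hR
    have hexp1 : 1 ≤ Real.exp K := Real.one_le_exp hK0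
    have hρR : ρ < R := by nlinarith [norm_nonneg x]
    have hR0 : 0 < R := lt_trans hρ hρR
    have hxR : ‖x‖ < R := by nlinarith [Real.exp_pos K]
    set D := Real.log (R ^ 2) - Real.log (ρ ^ 2) with hD
    have hDpos : 0 < D := by
      have : ρ ^ 2 < R ^ 2 := by nlinarith
      exact sub_pos.2 (Real.log_lt_log (by positivity) this)
    have hDK : K ≤ D := by
      have h1 : ρ * Real.exp K ≤ R := by nlinarith [norm_nonneg x]
      have h2 : Real.log (ρ * Real.exp K) ≤ Real.log R := Real.log_le_log (by positivity) h1
      rw [Real.log_mul (ne_of_gt hρ) (ne_of_gt (Real.exp_pos K)), Real.log_exp] at h2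
      have h3 : Real.log (R ^ 2) = 2 * Real.log R := by
        rw [Real.log_pow]; norm_num
      have h4 : Real.log (ρ ^ 2) = 2 * Real.log ρ := by
        rw [Real.log_pow]; norm_num
      simp only [hD, h3, h4]
      linarith
    set a := M / D with ha
    have ha0 : 0 ≤ a := div_nonneg hM0 hDpos.le
    set U : Set E2 := Ω ∩ ball 0 R with hU
    have hUo : IsOpen U := hΩo.inter isOpen_ball
    have hUb : Bornology.IsBounded U := (isBounded_ball).subset inter_subset_right
    have hclU : closure U ⊆ closure Ω := closure_mono inter_subset_left
    set g : E2 → ℝ := fun y => u y - a * ψ y with hg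
    have hψc : ∀ y ∈ closure Ω, ContinuousWithinAt ψ (closure U) y := by
      intro y hy
      have h1 : ContinuousAt (fun z => Real.log (qq z)) y :=
        (Real.continuousAt_log (hqne y hy)).comp continuous_qq.continuousAt
      exact (h1.sub continuousAt_const).continuousWithinAt
    have hgc : ContinuousOn g (closure U) := by
      intro y hy
      exact ((huc y (hclU hy)).mono hclU).sub
        ((continuousWithinAt_const.mul (hψc y (hclU hy))))
    have hψd : ∀ y : E2, qq y ≠ 0 → HasFDerivAt ψ (FG y) y := by
      intro y hne
      have h1 : HasFDerivAt (fun z => Real.log (qq z)) ((qq y)⁻¹ • Q2 y) y :=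
        (Real.hasDerivAt_log hne).comp_hasFDerivAt y (hasFDerivAt_qq y)
      exact h1.sub_const _
    set Fg : E2 → E2 →L[ℝ] ℝ := fun y => F y - a • FG y with hFgdef
    set Fg' : E2 → E2 →L[ℝ] E2 →L[ℝ] ℝ := fun y => F' y - a • FG' y with hFg'def
    have hFgd : ∀ y ∈ U, HasFDerivAt g (Fg y) y := by
      intro y hy
      exact (hF y hy.1).sub ((hψd y (hqne y (subset_closure hy.1))).const_mul a)
    have hFgd' : ∀ y ∈ U, HasFDerivAt Fg (Fg' y) y := by
      intro y hy
      exact (hF' y hy.1).sub ((hFGd y (hqne y (subset_closure hy.1))).const_smul a)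
    have hlapg : ∀ y ∈ U, ∑ i, Fg' y (ee i) (ee i) = 0 := by
      intro y hy
      have h1 : ∑ i, Fg' y (ee i) (ee i)
          = ∑ i, (F' y (ee i) (ee i) - a * FG' y (ee i) (ee i)) := by
        refine Finset.sum_congr rfl fun i _ => ?_
        simp [hFg'def, ContinuousLinearMap.sub_apply, ContinuousLinearMap.smul_apply, smul_eq_mul]
      rw [h1, Finset.sum_sub_distrib, hlap y hy.1, ← Finset.mul_sum,
        hFG'sum y (hqne y (subset_closure hy.1))]
      ring
    have hfr : ∀ y ∈ frontier U, g y ≤ 0 := by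
      intro y hy
      have hy' := frontier_inter_subset Ω (ball 0 R) hy
      rcases hy' with ⟨hy1, _⟩ | ⟨hy1, hy2⟩
      · have hyc : y ∈ closure Ω := frontier_subset_closure hy1
        have hu0 : u y = 0 := h0 y hy1
        have h2 : 0 ≤ a * ψ y := mul_nonneg ha0 (hψnn y hyc)
        simp only [hg, hu0]
        linarith
      · have hyc : y ∈ closure Ω := hy1
        rw [frontier_ball 0 (ne_of_gt hR0)] at hy2
        have hnorm : ‖y‖ = R := mem_sphere_zero_iff_norm.1 hy2
        have hψy : ψ y = D := by
          simp only [hψdef, hD, qq_eq_norm, hnorm]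
        have haD : a * D = M := div_mul_cancel₀ M (ne_of_gt hDpos)
        have := hM y hyc
        simp only [hg, hψy]
        linarith [haD]
    have hmax := maxPrinciple hUo hUb hgc hFgd hFgd' hlapg hfr
    have hxU : x ∈ U := ⟨hx, mem_ball_zero_iff.2 hxR⟩
    have hgx : g x ≤ 0 := hmax x (subset_closure hxU)
    have hux : u x ≤ a * ψ x := by simp only [hg] at hgx; linarith
    -- finally `a * ψ x ≤ δ`
    rcases eq_or_lt_of_le (mul_nonneg hM0 hψx) with heq | hpos
    · -- M * ψ x = 0
      have : a * ψ x = M * ψ x / D := by rw [ha]; ring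
      rw [this, ← heq, zero_div] at hux
      linarith
    · have hKpos : 0 < K := by rw [hK]; positivity
      have h1 : a * ψ x = M * ψ x / D := by rw [ha]; ring
      have h2 : M * ψ x / D ≤ M * ψ x / K := by
        gcongr
      have h3 : M * ψ x / K = δ := by
        rw [hK]
        field_simp
        exact div_self hpos.ne'
      calc u x ≤ a * ψ x := hux
        _ = M * ψ x / D := h1
        _ ≤ M * ψ x / K := h2
        _ = δ := h3
  -- conclude
  apply le_of_forall_pos_le_add
  intro δ hδ
  simpa using main δ hδ

/-- Uniqueness of the solution of the exterior Dirichlet problem with logarithmic growth. -/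
theorem uniqueness_exterior_harmonic
    (H : Set (EuclideanSpace ℝ (Fin 2))) (hHo : IsOpen H)
    (hHb : Bornology.IsBounded H) (hH0 : (0 : EuclideanSpace ℝ (Fin 2)) ∈ H)
    (htb : InteriorTangentBall H)
    (Ω : Set (EuclideanSpace ℝ (Fin 2))) (hΩ : Ω = (closure H)ᶜ)
    (φ₁ φ₂ : EuclideanSpace ℝ (Fin 2) → ℝ)
    (h₁c : ContinuousOn φ₁ (closure Ω)) (h₂c : ContinuousOn φ₂ (closure Ω))
    (h₁d : ContDiffOn ℝ 2 φ₁ Ω) (h₂d : ContDiffOn ℝ 2 φ₂ Ω)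
    (h₁h : ∀ x ∈ Ω, laplacian φ₁ x = 0) (h₂h : ∀ x ∈ Ω, laplacian φ₂ x = 0)
    (h₁0 : ∀ x ∈ frontier Ω, φ₁ x = 0) (h₂0 : ∀ x ∈ frontier Ω, φ₂ x = 0)
    (h₁bd : ∃ C, ∀ x ∈ closure Ω, |φ₁ x - Real.log ‖x‖| ≤ C)
    (h₂bd : ∃ C, ∀ x ∈ closure Ω, |φ₂ x - Real.log ‖x‖| ≤ C) :
    EqOn φ₁ φ₂ (closure Ω) := by
  have hΩo : IsOpen Ω := by rw [hΩ]; exact isClosed_closure.isOpen_compl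
  -- a radius `ρ` such that the closure of `Ω` avoids `ball 0 ρ`
  obtain ⟨ε, hε, hball⟩ := Metric.isOpen_iff.1 hHo 0 hH0
  have hρ : 0 < ε / 2 := by positivity
  have hfar : ∀ x ∈ closure Ω, ε / 2 < ‖x‖ := by
    intro x hx
    have hxH : x ∉ H := by
      have h1 : closure Ω = (interior (closure H))ᶜ := by rw [hΩ, closure_compl]
      have h2 : H ⊆ interior (closure H) := interior_maximal subset_closure hHo
      rw [h1] at hx
      exact fun hxH => hx (h2 hxH)
    by_contra hle
    push_neg at hle
    refine hxH (hball ?_)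
    rw [mem_ball_zero_iff]
    linarith
  -- a point of `Ω`
  obtain ⟨r, hr⟩ := (Metric.isBounded_iff_subset_ball 0).1 hHb.closure
  set y₀ : E2 := EuclideanSpace.single (0 : Fin 2) (|r| + 1) with hy₀def
  have hy₀ : y₀ ∈ Ω := by
    rw [hΩ]
    intro hmem
    have h1 := hr hmem
    rw [mem_ball_zero_iff, EuclideanSpace.norm_single, Real.norm_eq_abs,
      abs_of_nonneg (by positivity)] at h1
    linarith [le_abs_self r]
  have hy₀c : y₀ ∈ closure Ω := subset_closure hy₀
  -- the one-sided comparison, applied symmetrically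
  have keyapp : ∀ f g : E2 → ℝ, ContinuousOn f (closure Ω) → ContinuousOn g (closure Ω) →
      ContDiffOn ℝ 2 f Ω → ContDiffOn ℝ 2 g Ω →
      (∀ x ∈ Ω, laplacian f x = 0) → (∀ x ∈ Ω, laplacian g x = 0) →
      (∀ x ∈ frontier Ω, f x = 0) → (∀ x ∈ frontier Ω, g x = 0) →
      (∃ C, ∀ x ∈ closure Ω, |f x - Real.log ‖x‖| ≤ C) →
      (∃ C, ∀ x ∈ closure Ω, |g x - Real.log ‖x‖| ≤ C) →
      ∀ x ∈ Ω, f x - g x ≤ 0 := by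
    intro f g hfc hgc hfd hgd hfh hgh hf0 hg0 hfbd hgbd
    obtain ⟨C₁, hC₁⟩ := hfbd
    obtain ⟨C₂, hC₂⟩ := hgbd
    have hC₁0 : 0 ≤ C₁ := le_trans (abs_nonneg _) (hC₁ y₀ hy₀c)
    have hC₂0 : 0 ≤ C₂ := le_trans (abs_nonneg _) (hC₂ y₀ hy₀c)
    -- derivative data
    have hdf : ∀ y ∈ Ω, HasFDerivAt f (fderiv ℝ f y) y := fun y hy =>
      ((hfd.differentiableOn (by norm_num)).differentiableAt (hΩo.mem_nhds hy)).hasFDerivAt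
    have hdg : ∀ y ∈ Ω, HasFDerivAt g (fderiv ℝ g y) y := fun y hy =>
      ((hgd.differentiableOn (by norm_num)).differentiableAt (hΩo.mem_nhds hy)).hasFDerivAt
    have hf1 : ContDiffOn ℝ 1 (fderiv ℝ f) Ω := hfd.fderiv_of_isOpen hΩo (by norm_num)
    have hg1 : ContDiffOn ℝ 1 (fderiv ℝ g) Ω := hgd.fderiv_of_isOpen hΩo (by norm_num)
    have hdf' : ∀ y ∈ Ω, HasFDerivAt (fderiv ℝ f) (fderiv ℝ (fderiv ℝ f) y) y := fun y hy =>
      ((hf1.differentiableOn (by norm_num)).differentiableAt (hΩo.mem_nhds hy)).hasFDerivAt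
    have hdg' : ∀ y ∈ Ω, HasFDerivAt (fderiv ℝ g) (fderiv ℝ (fderiv ℝ g) y) y := fun y hy =>
      ((hg1.differentiableOn (by norm_num)).differentiableAt (hΩo.mem_nhds hy)).hasFDerivAt
    have hlapf : ∀ y ∈ Ω, ∑ i, fderiv ℝ (fderiv ℝ f) y (ee i) (ee i) = 0 := by
      intro y hy
      rw [← laplacian_eq ((hΩo.eventually_mem hy).mono fun t ht => hdf t ht) (hdf' y hy)]
      exact hfh y hy
    have hlapg : ∀ y ∈ Ω, ∑ i, fderiv ℝ (fderiv ℝ g) y (ee i) (ee i) = 0 := by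
      intro y hy
      rw [← laplacian_eq ((hΩo.eventually_mem hy).mono fun t ht => hdg t ht) (hdg' y hy)]
      exact hgh y hy
    refine exterior_le hΩo hρ hfar (hfc.sub hgc)
      (F := fun y => fderiv ℝ f y - fderiv ℝ g y)
      (F' := fun y => fderiv ℝ (fderiv ℝ f) y - fderiv ℝ (fderiv ℝ g) y)
      (fun y hy => (hdf y hy).sub (hdg y hy))
      (fun y hy => (hdf' y hy).sub (hdg' y hy))
      ?_ (fun y hy => by rw [hf0 y hy, hg0 y hy]; ring)
      (M := C₁ + C₂) (by positivity) ?_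
    · intro y hy
      have h1 : ∑ i, (fderiv ℝ (fderiv ℝ f) y - fderiv ℝ (fderiv ℝ g) y) (ee i) (ee i)
          = ∑ i, (fderiv ℝ (fderiv ℝ f) y (ee i) (ee i)
              - fderiv ℝ (fderiv ℝ g) y (ee i) (ee i)) := by
        refine Finset.sum_congr rfl fun i _ => ?_
        simp [ContinuousLinearMap.sub_apply]
      rw [h1, Finset.sum_sub_distrib, hlapf y hy, hlapg y hy]
      ring
    · intro y hy
      have h1 := hC₁ y hy
      have h2 := hC₂ y hy
      have h3 := (abs_le.1 h1).2
      have h4 := (abs_le.1 h2).1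
      linarith
  -- conclude
  intro x hx
  rcases em (x ∈ Ω) with hxΩ | hxΩ
  · have h1 := keyapp φ₁ φ₂ h₁c h₂c h₁d h₂d h₁h h₂h h₁0 h₂0 h₁bd h₂bd x hxΩ
    have h2 := keyapp φ₂ φ₁ h₂c h₁c h₂d h₁d h₂h h₁h h₂0 h₁0 h₂bd h₁bd x hxΩ
    linarith
  · have hxfr : x ∈ frontier Ω := by
      rw [hΩo.frontier_eq]
      exact ⟨hx, hxΩ⟩
    show φ₁ x = φ₂ x
    rw [h₁0 x hxfr, h₂0 x hxfr]
end

section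
/- Let m > 1 and let F_M(ξ) = c_m (ξ_M² − |ξ|²)₊^{1/(m−1)} on ℝ² with ξ_M = κ M^{(m−1)/(2m)} for fixed constants c_m, κ > 0. Then there exists C > 0 (depending on m, c_m, κ and an upper bound for the masses) such that for all 0 < M⁻ ≤ M⁺ bounded above and all ξ ∈ ℝ²: 0 ≤ F_{M⁺}(ξ) − F_{M⁻}(ξ) ≤ C((M⁺)^{1/m} − (M⁻)^{1/m}) if 1 < m ≤ 2, and 0 ≤ F_{M⁺}(ξ) − F_{M⁻}(ξ) ≤ C((M⁺)^{(m−1)/m} − (M⁻)^{(m−1)/m})^{1/(m−1)} if m > 2. -/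
open Real Set

/-- Real version of subadditivity of `x ↦ x ^ p` for `p ≤ 1`. -/
lemma my_rpow_add_le_add_rpow {p a b : ℝ} (ha : 0 ≤ a) (hb : 0 ≤ b)
    (hp0 : 0 ≤ p) (hp1 : p ≤ 1) : (a + b) ^ p ≤ a ^ p + b ^ p := by
  have h := NNReal.rpow_add_le_add_rpow a.toNNReal b.toNNReal hp0 hp1
  rw [← Real.toNNReal_add ha hb] at h
  have h2 := NNReal.coe_le_coe.2 h
  simpa [NNReal.coe_rpow, Real.coe_toNNReal _ ha, Real.coe_toNNReal _ hb,
    Real.coe_toNNReal _ (add_nonneg ha hb)] using h2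

/-- Convexity step: increments of `x ↦ x ^ p` over intervals of equal length increase. -/
lemma my_conv_step {p a b d : ℝ} (hp : 1 ≤ p) (ha : 0 ≤ a) (hab : a ≤ b) (hd : 0 ≤ d) :
    (a + d) ^ p - a ^ p ≤ (b + d) ^ p - b ^ p := by
  rcases eq_or_lt_of_le (by linarith : a ≤ b + d) with h | h
  · have hba : b = a := by nlinarith
    have hd0 : d = 0 := by nlinarith
    simp [hba, hd0]
  · set D : ℝ := b + d - a with hD_def
    have hD : 0 < D := by simp only [hD_def]; linarith
    set t : ℝ := d / D with ht_def
    have ht0 : 0 ≤ t := div_nonneg hd hD.le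
    have ht1 : t ≤ 1 := by
      rw [ht_def, div_le_one hD]; linarith
    have hf := convexOn_rpow hp
    have hmem1 : a ∈ Ici (0:ℝ) := ha
    have hmem2 : b + d ∈ Ici (0:ℝ) := by simp only [mem_Ici]; linarith
    have htD : t * D = d := by rw [ht_def]; exact div_mul_cancel₀ d hD.ne'
    have e1 : (1 - t) * a + t * (b + d) = a + d := by
      field_simp [ht_def]; linear_combination htD - t * hD_def
    have e2 : t * a + (1 - t) * (b + d) = b := by
      field_simp [ht_def]; linear_combination -htD + t * hD_def
    have h1 := hf.2 hmem1 hmem2 (by linarith : (0:ℝ) ≤ 1 - t) ht0 (by ring)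
    have h2 := hf.2 hmem1 hmem2 ht0 (by linarith : (0:ℝ) ≤ 1 - t) (by ring)
    simp only [smul_eq_mul] at h1 h2
    rw [e1] at h1
    rw [e2] at h2
    nlinarith [h1, h2]

lemma my_key1 {p x y t : ℝ} (hp : 1 ≤ p) (hy : 0 ≤ y) (hxy : y ≤ x) (ht : 0 ≤ t) :
    max (x - t) 0 ^ p - max (y - t) 0 ^ p ≤ x ^ p - y ^ p := by
  set a : ℝ := max (y - t) 0 with ha_def
  have ha0 : 0 ≤ a := le_max_right _ _
  have hay : a ≤ y := max_le (by linarith) hy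
  have hc : max (x - t) 0 ≤ a + (x - y) := by
    apply max_le
    · have : y - t ≤ a := le_max_left _ _
      linarith
    · linarith
  have h1 : max (x - t) 0 ^ p ≤ (a + (x - y)) ^ p :=
    Real.rpow_le_rpow (le_max_right _ _) hc (by linarith)
  have h2 := my_conv_step hp ha0 hay (by linarith : (0:ℝ) ≤ x - y)
  have hx : y + (x - y) = x := by ring
  rw [hx] at h2
  linarith

lemma my_key2 {p x y t : ℝ} (hp0 : 0 ≤ p) (hp1 : p ≤ 1) (hy : 0 ≤ y) (hxy : y ≤ x)
    (ht : 0 ≤ t) : max (x - t) 0 ^ p - max (y - t) 0 ^ p ≤ (x - y) ^ p := by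
  set a : ℝ := max (y - t) 0 with ha_def
  have ha0 : 0 ≤ a := le_max_right _ _
  have hc : max (x - t) 0 ≤ a + (x - y) := by
    apply max_le
    · have : y - t ≤ a := le_max_left _ _
      linarith
    · linarith
  have h1 : max (x - t) 0 ^ p ≤ (a + (x - y)) ^ p :=
    Real.rpow_le_rpow (le_max_right _ _) hc hp0
  have h2 := my_rpow_add_le_add_rpow ha0 (by linarith : (0:ℝ) ≤ x - y) hp0 hp1
  linarith


/-- Lipschitz-type control of the two-dimensional Barenblatt profile with respect to
the mass. -/
theorem barenblatt_profile_mass_estimate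
    (m cm κ B : ℝ) (hm : 1 < m) (hcm : 0 < cm) (hκ : 0 < κ) (hB : 0 < B)
    (F : ℝ → EuclideanSpace ℝ (Fin 2) → ℝ)
    (hF : ∀ M ξ, F M ξ = cm *
      (max ((κ * M ^ ((m - 1) / (2 * m))) ^ 2 - ‖ξ‖ ^ 2) 0) ^ (1 / (m - 1))) :
    ∃ C > (0 : ℝ), ∀ Mm Mp : ℝ, 0 < Mm → Mm ≤ Mp → Mp ≤ B →
      ∀ ξ : EuclideanSpace ℝ (Fin 2),
        0 ≤ F Mp ξ - F Mm ξ ∧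
        (m ≤ 2 → F Mp ξ - F Mm ξ ≤ C * (Mp ^ (1 / m) - Mm ^ (1 / m))) ∧
        (2 < m → F Mp ξ - F Mm ξ ≤
          C * (Mp ^ ((m - 1) / m) - Mm ^ ((m - 1) / m)) ^ (1 / (m - 1))) := by
  have hm1 : 0 < m - 1 := by linarith
  have hm0 : 0 < m := by linarith
  set p : ℝ := 1 / (m - 1) with hp_def
  have hp : 0 < p := by positivity
  refine ⟨cm * (κ ^ 2) ^ p, by positivity, ?_⟩
  intro Mm Mp hMm hMle hMB ξ
  have hMp : 0 < Mp := lt_of_lt_of_le hMm hMle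
  -- squared radius identity
  have hsq : ∀ M : ℝ, 0 < M →
      (κ * M ^ ((m - 1) / (2 * m))) ^ 2 = κ ^ 2 * M ^ ((m - 1) / m) := by
    intro M hM
    rw [mul_pow]
    congr 1
    rw [← Real.rpow_natCast (M ^ ((m - 1) / (2 * m))) 2, ← Real.rpow_mul hM.le]
    congr 1
    push_cast
    field_simp
  set r : ℝ := ‖ξ‖ ^ 2 with hr_def
  have hr : 0 ≤ r := by positivity
  set a : ℝ := κ ^ 2 * Mm ^ ((m - 1) / m) with ha_def
  set b : ℝ := κ ^ 2 * Mp ^ ((m - 1) / m) with hb_def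
  have ha0 : 0 ≤ a := by positivity
  have hab : a ≤ b := by
    apply mul_le_mul_of_nonneg_left _ (by positivity : (0:ℝ) ≤ κ ^ 2)
    exact Real.rpow_le_rpow hMm.le hMle (by positivity)
  have hFm : F Mm ξ = cm * max (a - r) 0 ^ p := by
    rw [hF, hsq Mm hMm]
  have hFp : F Mp ξ = cm * max (b - r) 0 ^ p := by
    rw [hF, hsq Mp hMp]
  have hdiff : F Mp ξ - F Mm ξ = cm * (max (b - r) 0 ^ p - max (a - r) 0 ^ p) := by
    rw [hFm, hFp]; ring
  have hmono : max (a - r) 0 ^ p ≤ max (b - r) 0 ^ p :=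
    Real.rpow_le_rpow (le_max_right _ _) (max_le_max (by linarith) le_rfl) hp.le
  -- rpow algebra : b ^ p = κ^(2p) * Mp^(1/m)
  have hpow : ∀ M : ℝ, 0 < M →
      (κ ^ 2 * M ^ ((m - 1) / m)) ^ p = (κ ^ 2) ^ p * M ^ (1 / m) := by
    intro M hM
    have hexp : (m - 1) / m * p = 1 / m := by
      rw [hp_def]; field_simp
    rw [Real.mul_rpow (by positivity) (by positivity), ← Real.rpow_mul hM.le, hexp]
  refine ⟨?_, ?_, ?_⟩
  · rw [hdiff]
    have : 0 ≤ max (b - r) 0 ^ p - max (a - r) 0 ^ p := by linarith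
    positivity
  · intro hm2
    have hp1 : 1 ≤ p := one_le_one_div hm1 (by linarith)
    have hkey := my_key1 (x := b) (y := a) (t := r) hp1 ha0 hab hr
    rw [hdiff]
    calc cm * (max (b - r) 0 ^ p - max (a - r) 0 ^ p) ≤ cm * (b ^ p - a ^ p) := by
          apply mul_le_mul_of_nonneg_left hkey hcm.le
      _ = cm * (κ ^ 2) ^ p * (Mp ^ (1 / m) - Mm ^ (1 / m)) := by
          rw [hb_def, ha_def, hpow Mp hMp, hpow Mm hMm]; ring
  · intro hm2
    have hp1 : p ≤ 1 := by
      rw [hp_def, div_le_one hm1]; linarith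
    have hkey := my_key2 (x := b) (y := a) (t := r) hp.le hp1 ha0 hab hr
    rw [hdiff]
    have hba : b - a = κ ^ 2 * (Mp ^ ((m - 1) / m) - Mm ^ ((m - 1) / m)) := by
      rw [hb_def, ha_def]; ring
    have hMba : 0 ≤ Mp ^ ((m - 1) / m) - Mm ^ ((m - 1) / m) := by
      have := Real.rpow_le_rpow hMm.le hMle (by positivity : (0:ℝ) ≤ (m - 1) / m)
      linarith
    calc cm * (max (b - r) 0 ^ p - max (a - r) 0 ^ p) ≤ cm * (b - a) ^ p := by
          apply mul_le_mul_of_nonneg_left hkey hcm.le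
      _ = cm * (κ ^ 2) ^ p * (Mp ^ ((m - 1) / m) - Mm ^ ((m - 1) / m)) ^ p := by
          rw [hba, Real.mul_rpow (by positivity) hMba]; ring
end
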